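/- Let S ⊇ R be a partial n-kummerian extension of an abelian group G of order n. Then S = ∑_{χ ∈ Ĝ} Q_{χ_p}, and this sum is direct if and only if S ⊇ R is a global Galois extension. -/

import Mathlib

/-- A unital partial action of a group `G` on a commutative ring `S`.
The unital ideal `S_g` is `S * e g` where `e g` is a central idempotent,
and `act g` is the partial isomorphism `α_g` (extended to all of `S` by
first multiplying by the identity `e g⁻¹` of its domain ideal). -/
structure PartialAction (G : Type*) [Group G] (S : Type*) [CommRing S] where
  e : G → S
  act : G → S → S
  e_idem : ∀ g, e g * e g = e g
  e_one : e 1 = 1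
  act_one : ∀ x, act 1 x = x
  act_add : ∀ g x y, act g (x + y) = act g x + act g y
  act_mul : ∀ g x y, act g (x * y) = act g x * act g y
  act_restrict : ∀ g x, act g (x * e g⁻¹) = act g x
  act_mem : ∀ g x, act g x * e g = act g x
  act_e : ∀ g, act g (e g⁻¹) = e g
  act_inter : ∀ g h, act g (e g⁻¹ * e h) = e g * e (g * h)
  act_comp : ∀ g h x, act g (act h x * e g⁻¹) = act (g * h) (x * e h⁻¹) * e g
  act_inv : ∀ g x, act g⁻¹ (act g (x * e g⁻¹)) = x * e g⁻¹

namespace PartialAction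

variable {G : Type*} [Group G] {S : Type*} [CommRing S] (P : PartialAction G S)

/-- The subring of subinvariants `S^α`. -/
def invariants : Set S := {a | ∀ g : G, P.act g (a * P.e g⁻¹) = a * P.e g}

/-- `S ⊇ R` is a partial Galois extension: `R = S^α` and there is a
partial Galois coordinate system. -/
def IsPartialGalois [Fintype G] [DecidableEq G] (R : Subring S) : Prop :=
  ((R : Set S) = P.invariants) ∧
    ∃ m : ℕ, ∃ x y : Fin m → S, ∀ g : G,
      (∑ i : Fin m, x i * P.act g (y i * P.e g⁻¹)) = if g = 1 then 1 else 0

/-- A partial 1-cocycle with values in `S`: `f g` is invertible in the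
unital ideal `S e g` with inverse `finv g`, and the cocycle identity holds. -/
structure Cocycle where
  f : G → S
  finv : G → S
  f_mem : ∀ g, f g * P.e g = f g
  finv_mem : ∀ g, finv g * P.e g = finv g
  f_mul_finv : ∀ g, f g * finv g = P.e g
  cocycle : ∀ g h, f (g * h) * P.e g = f g * P.act g (f h * P.e g⁻¹)

variable {P}

theorem act_zero (g : G) : P.act g 0 = 0 := by
  have := P.act_add g 0 0
  simpa using this.symm

/-- The set `Q_f = {a ∈ S : α_g(a 1_{g⁻¹}) = f(g) a for all g}` attached to a map `f : G → S`. -/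
def Qset (P : PartialAction G S) (f : G → S) : Set S :=
  {a | ∀ g : G, P.act g (a * P.e g⁻¹) = f g * a}

/-- `Q_f` as an `R`-submodule of `S`, where `R` is a subring of invariants. -/
def Qmod (P : PartialAction G S) (R : Subring S)
    (hR : ∀ r ∈ R, ∀ g : G, P.act g (r * P.e g⁻¹) = r * P.e g)
    (f : G → S) : Submodule R S where
  carrier := Qset P f
  zero_mem' := by
    intro g
    simp [Qset, act_zero]
  add_mem' := by
    intro a b ha hb g
    have := P.act_add g (a * P.e g⁻¹) (b * P.e g⁻¹)
    rw [Qset] at *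
    rw [add_mul, this, ha g, hb g, mul_add]
  smul_mem' := by
    intro c x hx g
    have hc : (c : S) ∈ (R : Set S) := c.2
    have hcx : c • x = (c : S) * x := Subring.smul_def c x
    have hx' : ∀ g : G, P.act g (x * P.e g⁻¹) = f g * x := hx
    rw [hcx]
    have h1 : P.act g ((c : S) * x * P.e g⁻¹) = P.act g ((c : S)) * P.act g x := by
      rw [P.act_restrict, P.act_mul]
    have h2 : P.act g ((c : S)) = (c : S) * P.e g := by
      rw [← P.act_restrict g (c : S), hR c c.2 g]
    have h3 : P.act g x = f g * x := by
      rw [← P.act_restrict g x]; exact hx' g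
    have h4 : (f g * x) * P.e g = f g * x := by
      have := P.act_mem g (x * P.e g⁻¹)
      rw [P.act_restrict, h3] at this
      exact this
    rw [h1, h2, h3]
    have h5 : (c : S) * P.e g * (f g * x) = (c : S) * (f g * x * P.e g) := by ring
    rw [h5, h4]
    ring

end PartialAction



section AuxUnit
variable {S : Type*} [CommRing S]

private lemma aux_prod_isUnit {ι : Type*} (s : Finset ι) (f : ι → S)
    (h : ∀ i ∈ s, IsUnit (f i)) : IsUnit (∏ i ∈ s, f i) :=
  Finset.prod_induction f IsUnit (fun _ _ => IsUnit.mul) isUnit_one h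

private lemma aux_unit_cancel {c t : S} (hc : IsUnit c) (h : c * t = 0) : t = 0 := by
  obtain ⟨v, hv⟩ := hc
  calc t = ↑v⁻¹ * (c * t) := by rw [← hv, ← mul_assoc, Units.inv_mul, one_mul]
    _ = 0 := by rw [h, mul_zero]

private lemma aux_geo {n : ℕ} {u : S} (hu : u ^ n = 1) (h1 : IsUnit (1 - u)) :
    (∑ k ∈ Finset.range n, u ^ k) = 0 := by
  have h2 : (∑ k ∈ Finset.range n, u ^ k) * (u - 1) = 0 := by
    rw [geom_sum_mul, hu, sub_self]
  have h3 : IsUnit (u - 1) := by rw [← neg_sub]; exact h1.neg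
  obtain ⟨v, hv⟩ := h3
  calc (∑ k ∈ Finset.range n, u ^ k)
      = (∑ k ∈ Finset.range n, u ^ k) * ((u - 1) * ↑v⁻¹) := by
        rw [← hv, Units.mul_inv, mul_one]
    _ = 0 := by rw [← mul_assoc, h2, zero_mul]

private lemma aux_isUnit_card {ω : S} {n : ℕ} (hn : 0 < n) (hω1 : ω ^ n = 1)
    (hωu : IsUnit ω) (hkum : ∀ i : ℕ, 1 ≤ i → i ≤ n - 1 → IsUnit (1 - ω ^ i)) :
    IsUnit ((n : ℕ) : S) := by
  classical
  obtain ⟨w, hw⟩ := hωu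
  have hωu : IsUnit ω := ⟨w, hw⟩
  set ωi : S := ↑w⁻¹ with hωidef
  have hωiu : IsUnit ωi := ⟨w⁻¹, rfl⟩
  have hmul : ω * ωi = 1 := by rw [← hw]; exact Units.mul_inv w
  have hωin : ωi ^ n = 1 := by
    have := congrArg (· ^ n) hmul
    simp only [mul_pow, one_pow, hω1, one_mul] at this
    exact this
  have hdiff : ∀ i j : ℕ, i < j → j < n → IsUnit (ω ^ j - ω ^ i) := by
    intro i j hij hj
    have e : i + (j - i) = j := Nat.add_sub_cancel' hij.le
    have h1 : ω ^ j - ω ^ i = -(ω ^ i) * (1 - ω ^ (j - i)) := by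
      rw [show ω ^ j = ω ^ i * ω ^ (j - i) by rw [← pow_add, e]]; ring
    rw [h1]
    exact ((hωu.pow i).neg).mul (hkum (j - i) (by omega) (by omega))
  have hdiffi : ∀ i j : ℕ, i < j → j < n → IsUnit (ωi ^ j - ωi ^ i) := by
    intro i j hij hj
    have e : i + (j - i) = j := Nat.add_sub_cancel' hij.le
    have h0 : ωi ^ i = ωi ^ j * ω ^ (j - i) := by
      rw [show ωi ^ j = ωi ^ i * ωi ^ (j - i) by rw [← pow_add, e]]
      rw [mul_assoc, ← mul_pow, mul_comm ωi ω, hmul, one_pow, mul_one]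
    have h1 : ωi ^ j - ωi ^ i = ωi ^ j * (1 - ω ^ (j - i)) := by rw [h0]; ring
    rw [h1]
    exact (hωiu.pow j).mul (hkum (j - i) (by omega) (by omega))
  set V := Matrix.vandermonde (fun i : Fin n => ω ^ (i : ℕ)) with hV
  set W := Matrix.vandermonde (fun i : Fin n => ωi ^ (i : ℕ)) with hW
  have hVW : V * Matrix.transpose W = ((n : S) • (1 : Matrix (Fin n) (Fin n) S)) := by
    ext i j
    have hi := i.isLt
    have hj := j.isLt
    rw [Matrix.mul_apply]
    simp only [hV, hW, Matrix.transpose_apply, Matrix.vandermonde_apply]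
    have hrw : ∀ k : Fin n, (ω ^ (i : ℕ)) ^ (k : ℕ) * (ωi ^ (j : ℕ)) ^ (k : ℕ)
        = (ω ^ (i : ℕ) * ωi ^ (j : ℕ)) ^ (k : ℕ) := fun k => (mul_pow _ _ _).symm
    rw [Finset.sum_congr rfl fun k _ => hrw k,
      Fin.sum_univ_eq_sum_range (fun k => (ω ^ (i : ℕ) * ωi ^ (j : ℕ)) ^ k) n]
    by_cases h : i = j
    · subst h
      have hu1 : ω ^ (i : ℕ) * ωi ^ (i : ℕ) = 1 := by rw [← mul_pow, hmul, one_pow]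
      rw [hu1]
      simp [Matrix.smul_apply, Matrix.one_apply_eq, smul_eq_mul]
    · set u := ω ^ (i : ℕ) * ωi ^ (j : ℕ) with hu
      have hun : u ^ n = 1 := by
        rw [hu, mul_pow, ← pow_mul, ← pow_mul, mul_comm (i : ℕ) n, mul_comm (j : ℕ) n,
          pow_mul, pow_mul, hω1, hωin, one_pow, one_pow, one_mul]
      have hne : (i : ℕ) ≠ (j : ℕ) := fun hc => h (Fin.ext hc)
      have hiu : IsUnit (1 - u) := by
        rcases hne.lt_or_gt with hlt | hlt
        · set m := (j : ℕ) - (i : ℕ) with hm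
          have hum : u = ωi ^ m := by
            rw [hu, show (j : ℕ) = (i : ℕ) + m by omega, pow_add, ← mul_assoc,
              ← mul_pow, hmul, one_pow, one_mul]
          have h1 : ωi ^ m * ω ^ m = 1 := by
            rw [← mul_pow, mul_comm ωi ω, hmul, one_pow]
          have h2 : -(ωi ^ m * (1 - ω ^ m)) = 1 - ωi ^ m := by
            rw [mul_sub, mul_one, h1]; ring
          rw [hum, ← h2]
          exact ((hωiu.pow m).mul (hkum m (by omega) (by omega))).neg
        · set m := (i : ℕ) - (j : ℕ) with hm
          have hum : u = ω ^ m := by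
            rw [hu, show (i : ℕ) = m + (j : ℕ) by omega, pow_add, mul_assoc,
              ← mul_pow, hmul, one_pow, mul_one]
          rw [hum]
          exact hkum m (by omega) (by omega)
      rw [aux_geo hun hiu]
      simp [Matrix.smul_apply, Matrix.one_apply_ne h]
  have hVdet : IsUnit V.det := by
    rw [hV, Matrix.det_vandermonde]
    refine aux_prod_isUnit _ _ fun i _ => ?_
    refine aux_prod_isUnit _ _ fun j hj => ?_
    exact hdiff i j (Fin.lt_def.mp (Finset.mem_Ioi.mp hj)) j.isLt
  have hWdet : IsUnit W.det := by
    rw [hW, Matrix.det_vandermonde]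
    refine aux_prod_isUnit _ _ fun i _ => ?_
    refine aux_prod_isUnit _ _ fun j hj => ?_
    exact hdiffi i j (Fin.lt_def.mp (Finset.mem_Ioi.mp hj)) j.isLt
  have hdet : V.det * W.det = (n : S) ^ n := by
    have h := congrArg Matrix.det hVW
    rwa [Matrix.det_mul, Matrix.det_transpose, Matrix.det_smul, Matrix.det_one, mul_one,
      Fintype.card_fin] at h
  have hpow : IsUnit ((n : S) ^ n) := hdet ▸ hVdet.mul hWdet
  exact (isUnit_pow_iff hn.ne').mp hpow

end AuxUnit

section PAAux
variable {G : Type*} [Group G] {S : Type*} [CommRing S] (P : PartialAction G S)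

private lemma PA_act_one (g : G) : P.act g 1 = P.e g := by
  have h := P.act_restrict g 1
  rw [one_mul, P.act_e] at h
  exact h.symm

private lemma PA_act_act (h g : G) (a : S) :
    P.act h (P.act g a) = P.act (h * g) a * P.e h := by
  have h1 := P.act_comp h g a
  rw [P.act_restrict, P.act_mul] at h1
  have h2 : P.act (h * g) (P.e g⁻¹) = P.e (h * g) * P.e (h * g * g⁻¹) := by
    rw [← P.act_restrict (h * g) (P.e g⁻¹), mul_comm (P.e g⁻¹), P.act_inter]
  rw [h2, mul_inv_cancel_right] at h1
  rw [h1]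
  calc P.act (h * g) a * (P.e (h * g) * P.e h) * P.e h
      = (P.act (h * g) a * P.e (h * g)) * (P.e h * P.e h) := by ring
    _ = P.act (h * g) a * P.e h := by rw [P.act_mem, P.e_idem]

private lemma PA_inv_of_mul_one {a b : S} (hab : a * b = 1)
    (ha : ∀ g, P.act g a = a * P.e g) : ∀ g, P.act g b = b * P.e g := by
  intro g
  have h1 : P.e g = a * P.e g * P.act g b := by
    have h := P.act_mul g a b
    rw [hab, PA_act_one, ha g] at h
    exact h
  have h2 : b * P.e g = P.act g b := by
    calc b * P.e g = b * (a * P.e g * P.act g b) := by rw [← h1]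
      _ = (a * b) * (P.e g * P.act g b) := by ring
      _ = P.e g * P.act g b := by rw [hab, one_mul]
      _ = P.act g b := by rw [mul_comm, P.act_mem]
  exact h2.symm

private lemma mem_Qmod_iff (R : Subring S)
    (hR : ∀ r ∈ R, ∀ g : G, P.act g (r * P.e g⁻¹) = r * P.e g)
    (f : G → S) (a : S) :
    a ∈ PartialAction.Qmod P R hR f ↔ ∀ g : G, P.act g a = f g * a := by
  constructor
  · intro h g
    have h2 : P.act g (a * P.e g⁻¹) = f g * a := h g
    rwa [P.act_restrict] at h2
  · intro h
    show ∀ g : G, P.act g (a * P.e g⁻¹) = f g * a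
    intro g
    rw [P.act_restrict]
    exact h g

end PAAux

/-- for a partial `n`-kummerian extension, `S = ∑_{χ ∈ Ĝ} Q_{χ_p}`, and the
sum is direct iff the extension is a (global) Galois extension. -/
theorem sum_Q_chi_eq_top {G : Type*} [CommGroup G] [Fintype G] [DecidableEq G]
    {S : Type*} [CommRing S] (P : PartialAction G S) (R : Subring S)
    (hR : ∀ r ∈ R, ∀ g : G, P.act g (r * P.e g⁻¹) = r * P.e g)
    (hGal : P.IsPartialGalois R)
    (ω : S) (hωR : ω ∈ R) (hωu : IsUnit ω) (hω : ω ^ Fintype.card G = 1)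
    (hkum : ∀ i : ℕ, 1 ≤ i → i ≤ Fintype.card G - 1 → IsUnit (1 - ω ^ i)) :
    (⨆ χ : {χ : G →* Sˣ // ∀ g : G, ((χ g : S)) ∈ Submonoid.powers ω},
        PartialAction.Qmod P R hR (fun g => (χ.1 g : S) * P.e g)) = ⊤ ∧
    (iSupIndep
        (fun χ : {χ : G →* Sˣ // ∀ g : G, ((χ g : S)) ∈ Submonoid.powers ω} =>
          PartialAction.Qmod P R hR (fun g => (χ.1 g : S) * P.e g)) ↔
      ∀ g : G, P.e g = 1) := by
  classical
  by_cases htriv : (1 : S) = 0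
  · have hsub : Subsingleton S := subsingleton_of_zero_eq_one htriv.symm
    refine ⟨?_, ?_, ?_⟩
    · refine Submodule.eq_top_iff'.mpr fun x => ?_
      rw [Subsingleton.elim x 0]
      exact Submodule.zero_mem _
    · intro _ g
      exact Subsingleton.elim _ _
    · intro _ χ
      rw [Submodule.disjoint_def]
      intro x _ _
      exact Subsingleton.elim x 0
  -- nontrivial case
  have hnt : (1 : S) ≠ 0 := htriv
  haveI : Nontrivial S := nontrivial_of_ne 1 0 hnt
  set n := Fintype.card G with hncard
  set X := {χ : G →* Sˣ // ∀ g : G, ((χ g : S)) ∈ Submonoid.powers ω} with hX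
  set Q := (fun χ : X => PartialAction.Qmod P R hR (fun g => (χ.1 g : S) * P.e g)) with hQ
  have hn0 : 0 < n := Fintype.card_pos
  have hnuIs : IsUnit ((n : ℕ) : S) := aux_isUnit_card hn0 hω hωu hkum
  obtain ⟨nu, hnu⟩ := hnuIs
  set ν : S := ((nu⁻¹ : Sˣ) : S) with hνdef
  have hν1 : ν * ((n : ℕ) : S) = 1 := by rw [← hnu, hνdef]; exact Units.inv_mul nu
  -- invariance facts
  have hInv : ∀ r : S, r ∈ R → ∀ g : G, P.act g r = r * P.e g := by
    intro r hr g
    rw [← P.act_restrict]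
    exact hR r hr g
  have hpow_mem : ∀ s : S, s ∈ Submonoid.powers ω → s ∈ R := by
    rintro s ⟨k, rfl⟩
    exact pow_mem hωR k
  have hInvPow : ∀ s : S, s ∈ Submonoid.powers ω → ∀ g : G, P.act g s = s * P.e g :=
    fun s hs => hInv s (hpow_mem s hs)
  have hInvν : ∀ g : G, P.act g ν = ν * P.e g := by
    refine PA_inv_of_mul_one P (a := ((n : ℕ) : S)) ?_ ?_
    · rw [mul_comm]; exact hν1
    · exact hInv _ (natCast_mem R n)
  -- finiteness of X
  haveI hXfin : Finite X := by
    have hmemT : ∀ (χ : X) (g : G),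
        ((χ.1 g : S)) ∈ ((Finset.range n).image (ω ^ ·) : Finset S) := by
      intro χ g
      obtain ⟨k, hk⟩ := χ.2 g
      have hk' : ω ^ k = ((χ.1 g : S)) := hk
      have hmod : ω ^ k = ω ^ (k % n) := by
        conv_lhs => rw [← Nat.div_add_mod k n]
        rw [pow_add, pow_mul, hω, one_pow, one_mul]
      rw [← hk', hmod]
      exact Finset.mem_image.mpr ⟨k % n, Finset.mem_range.mpr (Nat.mod_lt _ hn0), rfl⟩
    let F : X → (G → ((Finset.range n).image (ω ^ ·) : Finset S)) :=
      fun χ g => ⟨(χ.1 g : S), hmemT χ g⟩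
    have hF : Function.Injective F := by
      intro χ χ' h
      apply Subtype.ext
      apply MonoidHom.ext
      intro g
      apply Units.ext
      exact congrArg Subtype.val (congrFun h g)
    exact Finite.of_injective F hF
  haveI : Fintype X := Fintype.ofFinite X
  -- order of w
  obtain ⟨w, hw⟩ := hωu
  have hwn : w ^ n = 1 := Units.ext (by rw [Units.val_pow_eq_pow_val, hw, hω, Units.val_one])
  have hword : orderOf w = n := by
    have hdvd : orderOf w ∣ n := orderOf_dvd_of_pow_eq_one hwn
    have hpos : 0 < orderOf w := by
      rcases Nat.eq_zero_or_pos (orderOf w) with h0 | h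
      · rw [h0] at hdvd
        exact absurd (Nat.eq_zero_of_zero_dvd hdvd) hn0.ne'
      · exact h
    rcases lt_or_eq_of_le (Nat.le_of_dvd hn0 hdvd) with hlt | heq
    · exfalso
      have h1 : ω ^ orderOf w = 1 := by
        have h2 := congrArg Units.val (pow_orderOf_eq_one w)
        rwa [Units.val_pow_eq_pow_val, hw, Units.val_one] at h2
      have h3 := hkum (orderOf w) hpos (by omega)
      rw [h1, sub_self] at h3
      exact hnt (isUnit_zero_iff.mp h3).symm
    · exact heq
  -- units 1 - (power of ω different from 1)
  have hunit1 : ∀ s : S, s ∈ Submonoid.powers ω → s ≠ 1 → IsUnit (1 - s) := by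
    rintro s ⟨k, rfl⟩ hne
    have hne' : ω ^ k ≠ 1 := hne
    show IsUnit (1 - ω ^ k)
    have hmod : ω ^ k = ω ^ (k % n) := by
      conv_lhs => rw [← Nat.div_add_mod k n]
      rw [pow_add, pow_mul, hω, one_pow, one_mul]
    have hk0 : k % n ≠ 0 := fun h0 => hne' (by rw [hmod, h0, pow_zero])
    rw [hmod]
    have hklt : k % n < n := Nat.mod_lt _ hn0
    exact hkum (k % n) (by omega) (by omega)
  -- separation
  have hsep : ∀ g : G, g ≠ 1 → ∃ χ : X, ((χ.1 g : S)) ≠ 1 := by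
    intro g hg
    set H := Subgroup.zpowers w with hH
    haveI : IsCyclic H := by
      constructor
      refine ⟨⟨w, Subgroup.mem_zpowers w⟩, fun x => ?_⟩
      obtain ⟨k, hk⟩ := Subgroup.mem_zpowers_iff.mp x.2
      exact Subgroup.mem_zpowers_iff.mpr
        ⟨k, Subtype.ext (by rw [SubgroupClass.coe_zpow]; exact hk)⟩
    haveI : IsCyclic Hˣ := isCyclic_of_surjective (toUnits (G := H)) (toUnits (G := H)).surjective
    haveI : HasEnoughRootsOfUnity H n := by
      constructor
      · refine ⟨⟨w, Subgroup.mem_zpowers w⟩, ?_⟩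
        have ho : orderOf (⟨w, Subgroup.mem_zpowers w⟩ : H) = n := by
          rw [Subgroup.orderOf_mk]; exact hword
        exact ho ▸ IsPrimitiveRoot.orderOf _
      · infer_instance
    haveI : NeZero n := ⟨hn0.ne'⟩
    haveI : HasEnoughRootsOfUnity H (Monoid.exponent G) :=
      HasEnoughRootsOfUnity.of_dvd H Group.exponent_dvd_card
    obtain ⟨φ, hφ⟩ := CommGroup.exists_apply_ne_one_of_hasEnoughRootsOfUnity G H hg
    refine ⟨⟨(H.subtype).comp ((Units.coeHom H).comp φ), ?_⟩, ?_⟩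
    · intro g'
      obtain ⟨z, hz⟩ := Subgroup.mem_zpowers_iff.mp ((φ g' : H)).2
      have hz' : w ^ ((z % (n : ℤ)).toNat) = (((φ g' : H) : Sˣ)) := by
        rw [← hz, ← zpow_natCast,
          Int.toNat_of_nonneg (Int.emod_nonneg z (by exact_mod_cast hn0.ne'))]
        exact (zpow_eq_zpow_emod' z hwn).symm
      refine ⟨(z % (n : ℤ)).toNat, ?_⟩
      show ω ^ ((z % (n : ℤ)).toNat) = _
      rw [← hw, ← Units.val_pow_eq_pow_val, hz']
      rfl
    · intro hc
      apply hφ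
      have h1 : (((φ g : H) : Sˣ)) = 1 := Units.ext (by rw [Units.val_one]; exact hc)
      have h2 : ((φ g : H)) = 1 := OneMemClass.coe_eq_one.mp h1
      exact Units.ext h2
  -- X closure facts
  have XPmul : ∀ {χ χ' : G →* Sˣ}, (∀ g : G, ((χ g : S)) ∈ Submonoid.powers ω) →
      (∀ g : G, ((χ' g : S)) ∈ Submonoid.powers ω) →
      ∀ g : G, (((χ * χ') g : S)) ∈ Submonoid.powers ω := by
    intro χ χ' h h' g
    rw [MonoidHom.mul_apply, Units.val_mul]
    exact Submonoid.mul_mem _ (h g) (h' g)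
  have XPinv : ∀ {χ : G →* Sˣ}, (∀ g : G, ((χ g : S)) ∈ Submonoid.powers ω) →
      ∀ g : G, (((χ⁻¹ : G →* Sˣ) g : S)) ∈ Submonoid.powers ω := by
    intro χ h g
    have h1 : (χ⁻¹ : G →* Sˣ) g = χ g⁻¹ := by
      rw [MonoidHom.inv_apply, ← map_inv]
    rw [h1]
    exact h g⁻¹
  -- orthogonality over G
  have OG : ∀ χ : X, (∑ g : G, ((χ.1 g : S))) = if χ.1 = 1 then ((n : ℕ) : S) else 0 := by
    intro χ
    by_cases h1 : χ.1 = 1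
    · rw [if_pos h1, h1]
      simp only [MonoidHom.one_apply, Units.val_one]
      rw [Finset.sum_const, Finset.card_univ, nsmul_eq_mul, mul_one, hncard]
    · rw [if_neg h1]
      have hex : ∃ g₀ : G, χ.1 g₀ ≠ 1 := by
        by_contra hall
        push_neg at hall
        exact h1 (MonoidHom.ext fun g => hall g)
      obtain ⟨g₀, hg₀⟩ := hex
      have hre : (∑ g : G, ((χ.1 g : S))) = ∑ g : G, ((χ.1 (g₀ * g) : S)) :=
        (Fintype.sum_equiv (Equiv.mulLeft g₀) (fun g => ((χ.1 (g₀ * g) : S)))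
          (fun g => ((χ.1 g : S))) (fun g => rfl)).symm
      have hfac : ∀ g : G, ((χ.1 (g₀ * g) : S)) = (χ.1 g₀ : S) * (χ.1 g : S) := by
        intro g
        rw [map_mul, Units.val_mul]
      rw [Finset.sum_congr rfl (fun g _ => hfac g), ← Finset.mul_sum] at hre
      have hsub : (1 - (χ.1 g₀ : S)) * (∑ g : G, ((χ.1 g : S))) = 0 := by
        rw [sub_mul, one_mul, ← hre, sub_self]
      have hne1 : ((χ.1 g₀ : S)) ≠ 1 := fun hc => hg₀ (Units.ext (by rw [hc, Units.val_one]))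
      exact aux_unit_cancel (hunit1 _ (χ.2 g₀) hne1) hsub
  -- trivial character
  have trivmem : ∀ g : G, (((1 : G →* Sˣ) g : S)) ∈ Submonoid.powers ω := by
    intro g
    rw [MonoidHom.one_apply, Units.val_one]
    exact Submonoid.one_mem _
  set trivX : X := ⟨1, trivmem⟩ with htrivX
  -- orthogonality over X
  have OX0 : ∀ g : G, g ≠ 1 → (∑ χ : X, ((χ.1 g : S))) = 0 := by
    intro g hg
    obtain ⟨χ₀, hχ₀⟩ := hsep g hg
    have hbij : Function.Bijective (fun χ : X => (⟨χ₀.1 * χ.1, XPmul χ₀.2 χ.2⟩ : X)) := by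
      apply Function.bijective_iff_has_inverse.mpr
      refine ⟨fun χ => ⟨χ₀.1⁻¹ * χ.1, XPmul (XPinv χ₀.2) χ.2⟩, fun χ => ?_, fun χ => ?_⟩
      · exact Subtype.ext (inv_mul_cancel_left χ₀.1 χ.1)
      · exact Subtype.ext (mul_inv_cancel_left χ₀.1 χ.1)
    have hre : (∑ χ : X, (((χ₀.1 * χ.1) g : S))) = ∑ χ : X, ((χ.1 g : S)) :=
      Fintype.sum_bijective _ hbij (fun χ => (((χ₀.1 * χ.1) g : S)))
        (fun χ => ((χ.1 g : S))) (fun χ => rfl)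
    have hfac : ∀ χ : X, (((χ₀.1 * χ.1) g : S)) = (χ₀.1 g : S) * (χ.1 g : S) := by
      intro χ
      rw [MonoidHom.mul_apply, Units.val_mul]
    rw [Finset.sum_congr rfl (fun χ _ => hfac χ), ← Finset.mul_sum] at hre
    have hsub : (1 - (χ₀.1 g : S)) * (∑ χ : X, ((χ.1 g : S))) = 0 := by
      rw [sub_mul, one_mul, hre, sub_self]
    exact aux_unit_cancel (hunit1 _ (χ₀.2 g) hχ₀) hsub
  have OX1 : (∑ χ : X, ((χ.1 (1 : G) : S))) = ((n : ℕ) : S) := by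
    have hdouble : (∑ χ : X, ∑ g : G, ((χ.1 g : S))) = ((n : ℕ) : S) := by
      rw [Finset.sum_congr rfl (fun χ _ => OG χ)]
      rw [Fintype.sum_eq_single trivX (fun χ hne => if_neg (fun hc => hne (Subtype.ext hc)))]
      rw [if_pos rfl]
    have hswap : (∑ g : G, ∑ χ : X, ((χ.1 g : S))) = ((n : ℕ) : S) := by
      rw [Finset.sum_comm]; exact hdouble
    rwa [Fintype.sum_eq_single (1 : G) (fun g hg => OX0 g hg)] at hswap
  have OX : ∀ g : G, (∑ χ : X, ((χ.1 g : S))) = if g = 1 then ((n : ℕ) : S) else 0 := by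
    intro g
    by_cases hg : g = 1
    · rw [if_pos hg, hg]; exact OX1
    · rw [if_neg hg]; exact OX0 g hg
  -- sums of action
  have act_sum : ∀ (h : G) (f : G → S), P.act h (∑ g : G, f g) = ∑ g : G, P.act h (f g) :=
    fun h f => map_sum (AddMonoidHom.mk' (P.act h) (P.act_add h)) f Finset.univ
  -- the projection sums
  have hcQ : ∀ (χ : X) (a : S) (h : G),
      P.act h (∑ g : G, ((χ.1 g⁻¹ : S)) * P.act g a)
        = ((χ.1 h : S) * P.e h) * ∑ g : G, ((χ.1 g⁻¹ : S)) * P.act g a := by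
    intro χ a h
    rw [act_sum]
    have hterm : ∀ g : G, P.act h (((χ.1 g⁻¹ : S)) * P.act g a)
        = P.e h * (((χ.1 g⁻¹ : S)) * P.act (h * g) a) := by
      intro g
      rw [P.act_mul, hInvPow _ (χ.2 g⁻¹) h, PA_act_act P h g a]
      calc ((χ.1 g⁻¹ : S)) * P.e h * (P.act (h * g) a * P.e h)
          = (P.e h * P.e h) * (((χ.1 g⁻¹ : S)) * P.act (h * g) a) := by ring
        _ = P.e h * (((χ.1 g⁻¹ : S)) * P.act (h * g) a) := by rw [P.e_idem]
    rw [Finset.sum_congr rfl fun g _ => hterm g, ← Finset.mul_sum]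
    have hre : (∑ g : G, ((χ.1 g⁻¹ : S)) * P.act (h * g) a)
        = ∑ g : G, ((χ.1 (g⁻¹ * h) : S)) * P.act g a := by
      refine Fintype.sum_equiv (Equiv.mulLeft h) _ _ (fun g => ?_)
      have h1 : ((Equiv.mulLeft h) g)⁻¹ * h = g⁻¹ := by
        simp [mul_inv_rev, inv_mul_cancel_right]
      rw [h1]
      rfl
    rw [hre]
    have hsplit : ∀ g : G, ((χ.1 (g⁻¹ * h) : S)) * P.act g a
        = ((χ.1 h : S)) * (((χ.1 g⁻¹ : S)) * P.act g a) := by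
      intro g
      rw [map_mul, Units.val_mul]
      ring
    rw [Finset.sum_congr rfl fun g _ => hsplit g, ← Finset.mul_sum]
    ring
  -- scaling invariant elements
  have hscale : ∀ (χ : X) (r b : S), (∀ g : G, P.act g r = r * P.e g) →
      (∀ g : G, P.act g b = ((χ.1 g : S) * P.e g) * b) →
      ∀ g : G, P.act g (r * b) = ((χ.1 g : S) * P.e g) * (r * b) := by
    intro χ r b hr hb g
    rw [P.act_mul, hr g, hb g]
    calc r * P.e g * (((χ.1 g : S) * P.e g) * b)
        = ((χ.1 g : S) * (P.e g * P.e g)) * (r * b) := by ring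
      _ = ((χ.1 g : S) * P.e g) * (r * b) := by rw [P.e_idem]
  -- total sum
  have hcsum : ∀ a : S, (∑ χ : X, ∑ g : G, ((χ.1 g⁻¹ : S)) * P.act g a)
      = ((n : ℕ) : S) * a := by
    intro a
    rw [Finset.sum_comm]
    have hstep : ∀ g : G, (∑ χ : X, ((χ.1 g⁻¹ : S)) * P.act g a)
        = (∑ χ : X, ((χ.1 g⁻¹ : S))) * P.act g a := fun g => (Finset.sum_mul _ _ _).symm
    rw [Finset.sum_congr rfl fun g _ => hstep g]
    have hzero : ∀ g : G, g ≠ (1 : G) →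
        (∑ χ : X, ((χ.1 g⁻¹ : S))) * P.act g a = 0 := by
      intro g hg
      rw [OX g⁻¹, if_neg (fun hc => hg (inv_eq_one.mp hc)), zero_mul]
    rw [Fintype.sum_eq_single (1 : G) hzero, inv_one, OX 1, if_pos rfl, P.act_one]
  have hdecomp : ∀ a : S, a = ∑ χ : X, ν * ∑ g : G, ((χ.1 g⁻¹ : S)) * P.act g a := by
    intro a
    rw [← Finset.mul_sum, hcsum, ← mul_assoc, hν1, one_mul]
  have hmemν : ∀ (χ : X) (a : S),
      (ν * ∑ g : G, ((χ.1 g⁻¹ : S)) * P.act g a) ∈ Q χ := by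
    intro χ a
    exact (mem_Qmod_iff P R hR _ _).mpr (hscale χ ν _ hInvν (fun k => hcQ χ a k))
  have part1 : (⨆ χ : X, Q χ) = ⊤ := by
    refine Submodule.eq_top_iff'.mpr fun a => ?_
    rw [hdecomp a]
    exact Submodule.sum_mem _ fun χ _ => Submodule.mem_iSup_of_mem χ (hmemν χ a)
  -- global implies independent
  have hglobind : (∀ g : G, P.e g = 1) →
      ∀ χ : X, Disjoint (Q χ) (⨆ χ' : X, ⨆ _ : χ' ≠ χ, Q χ') := by
    intro hglob χ
    rw [Submodule.disjoint_def]
    intro a haQ hasup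
    have hπex : ∃ π : S →ₗ[R] S, ∀ b : S,
        π b = ν * ∑ g : G, ((χ.1 g⁻¹ : S)) * P.act g b := by
      refine ⟨{ toFun := fun b => ν * ∑ g : G, ((χ.1 g⁻¹ : S)) * P.act g b
                map_add' := ?_
                map_smul' := ?_ }, fun b => rfl⟩
      · intro b1 b2
        show ν * (∑ g : G, ((χ.1 g⁻¹ : S)) * P.act g (b1 + b2))
            = ν * (∑ g : G, ((χ.1 g⁻¹ : S)) * P.act g b1)
              + ν * (∑ g : G, ((χ.1 g⁻¹ : S)) * P.act g b2)
        have hterm : ∀ g : G, ((χ.1 g⁻¹ : S)) * P.act g (b1 + b2)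
            = ((χ.1 g⁻¹ : S)) * P.act g b1 + ((χ.1 g⁻¹ : S)) * P.act g b2 := by
          intro g
          rw [P.act_add, mul_add]
        rw [Finset.sum_congr rfl fun g _ => hterm g, Finset.sum_add_distrib, mul_add]
      · intro r b
        show ν * (∑ g : G, ((χ.1 g⁻¹ : S)) * P.act g (r • b))
            = r • (ν * ∑ g : G, ((χ.1 g⁻¹ : S)) * P.act g b)
        rw [Subring.smul_def, Subring.smul_def, smul_eq_mul, smul_eq_mul]
        have hterm : ∀ g : G, ((χ.1 g⁻¹ : S)) * P.act g ((r : S) * b)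
            = (r : S) * (((χ.1 g⁻¹ : S)) * P.act g b) := by
          intro g
          rw [P.act_mul, hInv _ r.2 g]
          calc ((χ.1 g⁻¹ : S)) * ((r : S) * P.e g * P.act g b)
              = (r : S) * (((χ.1 g⁻¹ : S)) * (P.act g b * P.e g)) := by ring
            _ = (r : S) * (((χ.1 g⁻¹ : S)) * P.act g b) := by rw [P.act_mem]
        rw [Finset.sum_congr rfl fun g _ => hterm g, ← Finset.mul_sum]
        ring
    obtain ⟨π, hπapp⟩ := hπex
    have hkeyB : π a = a := by
      rw [hπapp]
      have haQ' : ∀ g : G, P.act g a = ((χ.1 g : S)) * a := by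
        intro g
        have h0 := (mem_Qmod_iff P R hR _ a).mp haQ g
        rwa [hglob g, mul_one] at h0
      have hterm : ∀ g : G, ((χ.1 g⁻¹ : S)) * P.act g a = a := by
        intro g
        rw [haQ' g, ← mul_assoc, ← Units.val_mul, ← map_mul, inv_mul_cancel, map_one,
          Units.val_one, one_mul]
      rw [Finset.sum_congr rfl fun g _ => hterm g, Finset.sum_const, Finset.card_univ,
        nsmul_eq_mul, ← hncard, ← mul_assoc, hν1, one_mul]
    have hkeyA : ∀ χ' : X, χ' ≠ χ → ∀ b ∈ Q χ', π b = 0 := by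
      intro χ' hne b hb
      rw [hπapp]
      have hb' : ∀ g : G, P.act g b = ((χ'.1 g : S)) * b := by
        intro g
        have h0 := (mem_Qmod_iff P R hR _ b).mp hb g
        rwa [hglob g, mul_one] at h0
      have hterm : ∀ g : G, ((χ.1 g⁻¹ : S)) * P.act g b
          = (((χ.1⁻¹ * χ'.1 : G →* Sˣ) g : S)) * b := by
        intro g
        rw [hb' g, ← mul_assoc]
        congr 1
        rw [MonoidHom.mul_apply, Units.val_mul, MonoidHom.inv_apply, ← map_inv]
      rw [Finset.sum_congr rfl fun g _ => hterm g, ← Finset.sum_mul]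
      have hψmem : ∀ g : G, (((χ.1⁻¹ * χ'.1 : G →* Sˣ) g : S)) ∈ Submonoid.powers ω :=
        XPmul (XPinv χ.2) χ'.2
      have hOG : (∑ g : G, (((χ.1⁻¹ * χ'.1 : G →* Sˣ) g : S)))
          = if (χ.1⁻¹ * χ'.1 : G →* Sˣ) = 1 then ((n : ℕ) : S) else 0 := OG ⟨_, hψmem⟩
      rw [hOG, if_neg (fun hc => hne (Subtype.ext ((inv_mul_eq_one.mp hc).symm))), zero_mul,
        mul_zero]
    have hle : (⨆ χ' : X, ⨆ _ : χ' ≠ χ, Q χ') ≤ LinearMap.ker π :=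
      iSup_le fun χ' => iSup_le fun hne => fun b' hb' =>
        LinearMap.mem_ker.mpr (hkeyA χ' hne b' hb')
    rw [← hkeyB]
    exact LinearMap.mem_ker.mp (hle hasup)
  -- independent implies global
  have hindglob : (∀ χ : X, Disjoint (Q χ) (⨆ χ' : X, ⨆ _ : χ' ≠ χ, Q χ')) →
      ∀ h : G, P.e h = 1 := by
    intro hind h
    have humem : ∀ χ : X, (ν * ∑ g : G, ((χ.1 g⁻¹ : S)) * P.act g 1) ∈ Q χ :=
      fun χ => hmemν χ 1
    have hvmem : ∀ χ : X, (if χ = trivX then (1 : S) else 0) ∈ Q χ := by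
      intro χ
      by_cases hχ : χ = trivX
      · rw [if_pos hχ, hχ]
        refine (mem_Qmod_iff P R hR _ _).mpr fun g => ?_
        rw [PA_act_one]
        show P.e g = ((((1 : G →* Sˣ) g : S)) * P.e g) * 1
        rw [MonoidHom.one_apply, Units.val_one, one_mul, mul_one]
      · rw [if_neg hχ]
        exact Submodule.zero_mem _
    have husum : (∑ χ : X, (ν * ∑ g : G, ((χ.1 g⁻¹ : S)) * P.act g 1)) = 1 := by
      rw [← Finset.mul_sum, hcsum 1, mul_one, hν1]
    have hvsum : (∑ χ : X, (if χ = trivX then (1 : S) else 0)) = 1 := by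
      rw [Fintype.sum_eq_single trivX (fun χ hne => if_neg hne), if_pos rfl]
    have hdiff0 : ∀ χ : X,
        (ν * ∑ g : G, ((χ.1 g⁻¹ : S)) * P.act g 1) - (if χ = trivX then (1 : S) else 0)
          = 0 := by
      intro χ
      have hmemQ : (ν * ∑ g : G, ((χ.1 g⁻¹ : S)) * P.act g 1)
          - (if χ = trivX then (1 : S) else 0) ∈ Q χ :=
        Submodule.sub_mem _ (humem χ) (hvmem χ)
      have hsum0 : (∑ χ' : X, ((ν * ∑ g : G, ((χ'.1 g⁻¹ : S)) * P.act g 1)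
          - (if χ' = trivX then (1 : S) else 0))) = 0 := by
        rw [Finset.sum_sub_distrib, husum, hvsum, sub_self]
      have hmemS : (ν * ∑ g : G, ((χ.1 g⁻¹ : S)) * P.act g 1)
          - (if χ = trivX then (1 : S) else 0) ∈ ⨆ χ' : X, ⨆ _ : χ' ≠ χ, Q χ' := by
        have heq : (ν * ∑ g : G, ((χ.1 g⁻¹ : S)) * P.act g 1)
            - (if χ = trivX then (1 : S) else 0)
            = - ∑ χ' ∈ Finset.univ.erase χ, ((ν * ∑ g : G, ((χ'.1 g⁻¹ : S)) * P.act g 1)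
              - (if χ' = trivX then (1 : S) else 0)) := by
          have h2 := hsum0
          rw [← Finset.add_sum_erase _ _ (Finset.mem_univ χ)] at h2
          exact eq_neg_of_add_eq_zero_left h2
        rw [heq]
        refine Submodule.neg_mem _ (Submodule.sum_mem _ fun χ' hχ' => ?_)
        have hne : χ' ≠ χ := Finset.ne_of_mem_erase hχ'
        exact Submodule.mem_iSup_of_mem χ' (Submodule.mem_iSup_of_mem hne
          (Submodule.sub_mem _ (humem χ') (hvmem χ')))
      exact Submodule.disjoint_def.mp (hind χ) _ hmemQ hmemS
    have hc1 : ∀ χ : X, (∑ g : G, ((χ.1 g⁻¹ : S)) * P.act g 1)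
        = ((n : ℕ) : S) * (if χ = trivX then (1 : S) else 0) := by
      intro χ
      have h0 : ν * ∑ g : G, ((χ.1 g⁻¹ : S)) * P.act g 1
          = (if χ = trivX then (1 : S) else 0) := sub_eq_zero.mp (hdiff0 χ)
      calc (∑ g : G, ((χ.1 g⁻¹ : S)) * P.act g 1)
          = ((n : ℕ) : S) * (ν * ∑ g : G, ((χ.1 g⁻¹ : S)) * P.act g 1) := by
            rw [← mul_assoc, mul_comm ((n : ℕ) : S) ν, hν1, one_mul]
        _ = ((n : ℕ) : S) * (if χ = trivX then (1 : S) else 0) := by rw [h0]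
    have hE1 : (∑ χ : X, ((χ.1 h : S)) * ∑ g : G, ((χ.1 g⁻¹ : S)) * P.act g 1)
        = ((n : ℕ) : S) := by
      rw [Finset.sum_congr rfl fun χ _ => by rw [hc1 χ]]
      rw [Fintype.sum_eq_single trivX (fun χ hne => by rw [if_neg hne, mul_zero, mul_zero])]
      rw [if_pos rfl, mul_one]
      show (((1 : G →* Sˣ) h : S)) * ((n : ℕ) : S) = ((n : ℕ) : S)
      rw [MonoidHom.one_apply, Units.val_one, one_mul]
    have hE2 : (∑ χ : X, ((χ.1 h : S)) * ∑ g : G, ((χ.1 g⁻¹ : S)) * P.act g 1)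
        = ((n : ℕ) : S) * P.e h := by
      have hstep1 : ∀ χ : X, ((χ.1 h : S)) * ∑ g : G, ((χ.1 g⁻¹ : S)) * P.act g 1
          = ∑ g : G, ((χ.1 (h * g⁻¹) : S)) * P.act g 1 := by
        intro χ
        rw [Finset.mul_sum]
        refine Finset.sum_congr rfl fun g _ => ?_
        rw [map_mul, Units.val_mul, mul_assoc]
      rw [Finset.sum_congr rfl fun χ _ => hstep1 χ, Finset.sum_comm]
      have hstep2 : ∀ g : G, (∑ χ : X, ((χ.1 (h * g⁻¹) : S)) * P.act g 1)
          = (∑ χ : X, ((χ.1 (h * g⁻¹) : S))) * P.act g 1 :=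
        fun g => (Finset.sum_mul _ _ _).symm
      rw [Finset.sum_congr rfl fun g _ => hstep2 g]
      have hzero : ∀ g : G, g ≠ h →
          (∑ χ : X, ((χ.1 (h * g⁻¹) : S))) * P.act g 1 = 0 := by
        intro g hg
        rw [OX (h * g⁻¹),
          if_neg (fun hc => hg (by rwa [mul_inv_eq_one, eq_comm] at hc)), zero_mul]
      rw [Fintype.sum_eq_single h hzero, OX (h * h⁻¹), if_pos (mul_inv_cancel h),
        PA_act_one]
    have hfin : ((n : ℕ) : S) * P.e h = ((n : ℕ) : S) * 1 := by
      rw [← hE2, hE1, mul_one]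
    calc P.e h = ν * (((n : ℕ) : S) * P.e h) := by rw [← mul_assoc, hν1, one_mul]
      _ = ν * (((n : ℕ) : S) * 1) := by rw [hfin]
      _ = 1 := by rw [mul_one, hν1]
  exact ⟨part1, fun hind => hindglob (fun χ => hind χ), fun hglob χ => hglobind hglob χ⟩
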